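/- arXiv:0710.2281 — 5 statements merged into one kernel-verified Lean document; each statement's English description precedes it below -/
import Mathlib

section
/- For every β ∈ ℂ, the formal power series Φ_β(x) satisfies the differential equation x·Φ_β''(x) + (x+1)·Φ_β'(x) − β·Φ_β(x) = 0 in ℂ⟦x⟧, where ' denotes the formal derivative d/dx of power series. -/
/-- The generalized binomial coefficient `binom(β,n) = (1/n!) ∏_{j=0}^{n-1} (β - j)`. -/
noncomputable def genBinom {R : Type*} [CommRing R] [Algebra ℚ R] (β : R) (n : ℕ) : R :=
  (n.factorial : ℚ)⁻¹ • ∏ j ∈ Finset.range n, (β - (j : R))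

/-- The hypergeometric series `Φ_β(x) = ∑_{n ≥ 0} binom(β,n) xⁿ / n!`. -/
noncomputable def Phi (β : ℂ) : PowerSeries ℂ :=
  PowerSeries.mk fun n => (n.factorial : ℂ)⁻¹ * genBinom β n

/-- The formal derivative `d/dx` of a power series. -/
noncomputable def psDeriv (f : PowerSeries ℂ) : PowerSeries ℂ :=
  PowerSeries.mk fun n => ((n : ℂ) + 1) * PowerSeries.coeff (R := ℂ) (n + 1) f

lemma phi_coeff (β : ℂ) (n : ℕ) :
    PowerSeries.coeff (R := ℂ) n (Phi β) =
      ((n.factorial : ℂ))⁻¹ * ((n.factorial : ℂ))⁻¹ * ∏ j ∈ Finset.range n, (β - (j : ℂ)) := by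
  simp [Phi, genBinom, Rat.smul_def, mul_assoc]

lemma key (β : ℂ) (n : ℕ) :
    ((n : ℂ) + 1) * ((n : ℂ) + 1) * PowerSeries.coeff (R := ℂ) (n + 1) (Phi β)
      = (β - n) * PowerSeries.coeff (R := ℂ) n (Phi β) := by
  rw [phi_coeff, phi_coeff, Finset.prod_range_succ, Nat.factorial_succ]
  have h : ((n.factorial : ℂ)) ≠ 0 := Nat.cast_ne_zero.mpr n.factorial_ne_zero
  have h2 : ((n : ℂ) + 1) ≠ 0 := Nat.cast_add_one_ne_zero n
  push_cast
  field_simp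

/-- `Φ_β` satisfies the differential equation `x Φ'' + (x+1) Φ' - β Φ = 0`. -/
theorem phi_ode (β : ℂ) :
    PowerSeries.X * psDeriv (psDeriv (Phi β)) + (PowerSeries.X + 1) * psDeriv (Phi β)
      - PowerSeries.C (R := ℂ) β * Phi β = 0 := by
  ext n
  have e : ∀ f : PowerSeries ℂ, (PowerSeries.X + 1) * f = PowerSeries.X * f + f := by
    intro f; ring
  rw [e]
  cases n with
  | zero =>
    have h0 : (PowerSeries.constantCoeff (R := ℂ)) (Phi β) = 1 := by simp [Phi, genBinom]
    simp [psDeriv, phi_coeff, h0]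
  | succ n =>
    simp only [map_add, map_sub, PowerSeries.coeff_succ_X_mul, PowerSeries.coeff_C_mul,
      psDeriv, PowerSeries.coeff_mk, map_zero]
    have k1 := key β (n + 1)
    have k2 := key β n
    push_cast at k1 k2 ⊢
    linear_combination k1
end

section
/- For every β ∈ ℂ, the formal power series in two variables F(x,y) := Φ_β(−xy) = ∑_{n≥0} binom(β,n)·(−1)ⁿ·xⁿ·yⁿ/n! ∈ ℂ⟦x,y⟧ satisfies the identity ∂_x∂_y F = y·∂_y F − β·F. -/
/-- The partial derivative `∂_i` on formal power series in two variables `x = X 0`, `y = X 1`. -/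
noncomputable def pdMv (i : Fin 2) (F : MvPowerSeries (Fin 2) ℂ) : MvPowerSeries (Fin 2) ℂ :=
  fun d => ((d i : ℂ) + 1) * MvPowerSeries.coeff (R := ℂ) (d + Finsupp.single i 1) F

/-- `F(x,y) = Φ_β(-xy) = ∑_{n ≥ 0} binom(β,n) (-1)ⁿ xⁿ yⁿ / n!` in `ℂ⟦x,y⟧`. -/
noncomputable def Fser (β : ℂ) : MvPowerSeries (Fin 2) ℂ :=
  fun d => if d 0 = d 1 then ((d 0).factorial : ℂ)⁻¹ * (-1) ^ (d 0) * genBinom β (d 0) else 0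

lemma genBinom_complex (β : ℂ) (n : ℕ) :
    genBinom β n = ((n.factorial : ℂ))⁻¹ * ∏ j ∈ Finset.range n, (β - (j : ℂ)) := by
  rw [genBinom, Rat.smul_def]
  push_cast
  ring

lemma coeff_X_mul' (d : Fin 2 →₀ ℕ) (s : Fin 2) (φ : MvPowerSeries (Fin 2) ℂ) :
    MvPowerSeries.coeff (R := ℂ) d (MvPowerSeries.X s * φ)
      = if d s = 0 then 0 else MvPowerSeries.coeff (R := ℂ) (d - Finsupp.single s 1) φ := by
  split_ifs with h
  · rw [MvPowerSeries.coeff_mul]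
    refine Finset.sum_eq_zero fun p hp => ?_
    rw [Finset.HasAntidiagonal.mem_antidiagonal] at hp
    rw [MvPowerSeries.coeff_X]
    have : p.1 ≠ Finsupp.single s 1 := by
      intro he
      have : d s = p.1 s + p.2 s := by rw [← hp]; simp
      rw [he] at this
      simp [h] at this
      omega
    rw [if_neg this, zero_mul]
  · have hd : d = Finsupp.single s 1 + (d - Finsupp.single s 1) := by
      ext t
      by_cases ht : t = s
      · subst ht; simp; omega
      · simp [Finsupp.single_apply, Ne.symm ht]
    calc MvPowerSeries.coeff (R := ℂ) d (MvPowerSeries.X s * φ)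
        = MvPowerSeries.coeff (R := ℂ) (Finsupp.single s 1 + (d - Finsupp.single s 1))
            (MvPowerSeries.monomial (R := ℂ) (Finsupp.single s 1) 1 * φ) := by rw [← hd]; rfl
      _ = 1 * MvPowerSeries.coeff (R := ℂ) (d - Finsupp.single s 1) φ :=
          MvPowerSeries.coeff_add_monomial_mul _ _ _ _
      _ = _ := one_mul _

lemma coeff_pdMv (i : Fin 2) (d : Fin 2 →₀ ℕ) (G : MvPowerSeries (Fin 2) ℂ) :
    MvPowerSeries.coeff (R := ℂ) d (pdMv i G)
      = ((d i : ℂ) + 1) * MvPowerSeries.coeff (R := ℂ) (d + Finsupp.single i 1) G := rfl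

lemma coeff_Fser (β : ℂ) (d : Fin 2 →₀ ℕ) :
    MvPowerSeries.coeff (R := ℂ) d (Fser β)
      = if d 0 = d 1 then ((d 0).factorial : ℂ)⁻¹ * (-1) ^ (d 0) * genBinom β (d 0) else 0 := rfl

lemma key_s2 (β : ℂ) (n : ℕ) :
    ((n : ℂ) + 1) * (((n : ℂ) + 1) * (((n + 1).factorial : ℂ)⁻¹ * (-1) ^ (n + 1) * genBinom β (n + 1)))
      = (n : ℂ) * ((n.factorial : ℂ)⁻¹ * (-1) ^ n * genBinom β n)
        - β * ((n.factorial : ℂ)⁻¹ * (-1) ^ n * genBinom β n) := by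
  rw [genBinom_complex, genBinom_complex, Finset.prod_range_succ, Nat.factorial_succ]
  have h1 : ((n.factorial : ℂ)) ≠ 0 := Nat.cast_ne_zero.2 n.factorial_ne_zero
  have h2 : ((n : ℂ) + 1) ≠ 0 := Nat.cast_add_one_ne_zero n
  push_cast
  field_simp
  ring

/-- `∂_x ∂_y F = y ∂_y F - β F`. -/
theorem stmt2 (β : ℂ) :
    pdMv 0 (pdMv 1 (Fser β))
      = MvPowerSeries.X 1 * pdMv 1 (Fser β) - MvPowerSeries.C (σ := Fin 2) (R := ℂ) β * Fser β := by
  apply MvPowerSeries.ext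
  intro d
  rw [map_sub, MvPowerSeries.coeff_C_mul, coeff_X_mul', coeff_pdMv, coeff_pdMv, coeff_Fser,
    coeff_Fser]
  have e0 : ((d + Finsupp.single 0 1 + Finsupp.single 1 1 : Fin 2 →₀ ℕ)) 0 = d 0 + 1 := by simp
  have e1 : ((d + Finsupp.single 0 1 : Fin 2 →₀ ℕ)) 1 = d 1 := by simp
  have e2 : ((d + Finsupp.single 0 1 + Finsupp.single 1 1 : Fin 2 →₀ ℕ)) 1 = d 1 + 1 := by simp
  rw [e0, e1, e2]
  by_cases hde : d 0 = d 1
  · rw [if_pos (by omega : d 0 + 1 = d 1 + 1), if_pos hde, hde]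
    by_cases h1 : d 1 = 0
    · rw [if_pos h1, h1]
      simpa using key_s2 β 0
    · rw [if_neg h1, coeff_pdMv]
      have es : ((d - Finsupp.single 1 1 : Fin 2 →₀ ℕ)) 1 = d 1 - 1 := by simp
      have hsum : d - Finsupp.single 1 1 + Finsupp.single 1 1 = d := by
        ext t
        by_cases ht : t = 1
        · subst ht; simp; omega
        · simp [Finsupp.single_apply, Ne.symm ht]
      rw [es, hsum, coeff_Fser, if_pos hde, hde]
      have hcast : ((d 1 - 1 : ℕ) : ℂ) + 1 = (d 1 : ℂ) := by
        have : (d 1 - 1) + 1 = d 1 := by omega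
        exact_mod_cast congrArg (Nat.cast : ℕ → ℂ) this
      rw [hcast]
      have := key_s2 β (d 1)
      calc ((d 1 : ℂ) + 1) * (((d 1 : ℂ) + 1) *
            (((d 1 + 1).factorial : ℂ)⁻¹ * (-1) ^ (d 1 + 1) * genBinom β (d 1 + 1)))
          = (d 1 : ℂ) * (((d 1).factorial : ℂ)⁻¹ * (-1) ^ (d 1) * genBinom β (d 1))
            - β * (((d 1).factorial : ℂ)⁻¹ * (-1) ^ (d 1) * genBinom β (d 1)) := this
        _ = _ := by ring
  · -- d 0 ≠ d 1 : everything vanishes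
    rw [if_neg (by omega : ¬ d 0 + 1 = d 1 + 1), if_neg hde]
    by_cases h1 : d 1 = 0
    · rw [if_pos h1]; ring
    · rw [if_neg h1, coeff_pdMv]
      have hsum : d - Finsupp.single 1 1 + Finsupp.single 1 1 = d := by
        ext t
        by_cases ht : t = 1
        · subst ht; simp; omega
        · simp [Finsupp.single_apply, Ne.symm ht]
      rw [hsum, coeff_Fser, if_neg hde]
      ring
end

section
/- Let T be the ℚ-linear derivation of the polynomial ring ℚ[y₁,y₂,y₃,…] determined by T(y_k) = (k+1)·y_{k+1} for all k ≥ 1, and let M_{y₁} denote the operator of multiplication by y₁. Then for every n ≥ 0 the elementary Schur polynomial satisfies n!·S_n(y₁,y₂,…) = (M_{y₁} + T)ⁿ(1); equivalently, the recursion (M_{y₁} + T)(S_{n−1}) = n·S_n holds for every n ≥ 1. -/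
open MvPolynomial

/-- The elementary Schur polynomial `S_n(y₁,y₂,…) = ∑_{i₁+2i₂+⋯=n} ∏_k y_k^{i_k}/i_k!`,
in the polynomial ring `ℚ[y₁,y₂,…] ⊆ MvPolynomial ℕ ℚ` with `y_k = X k` for `k ≥ 1`. -/
noncomputable def schur (n : ℕ) : MvPolynomial ℕ ℚ :=
  ∑ i : Fin n → Fin (n + 1),
    if (∑ k : Fin n, (k.1 + 1) * (i k).1) = n then
      ∏ k : Fin n, C (((i k).1.factorial : ℚ)⁻¹) * X (k.1 + 1) ^ ((i k).1)
    else 0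

/-- The derivation `T` of `ℚ[y₁,y₂,…]` determined by `T(y_k) = (k+1) y_{k+1}`. -/
noncomputable def Tder : Derivation ℚ (MvPolynomial ℕ ℚ) (MvPolynomial ℕ ℚ) :=
  MvPolynomial.mkDerivation ℚ fun k => ((k : MvPolynomial ℕ ℚ) + 1) * X (k + 1)

open Finsupp

/-- weight -/
def wt (d : ℕ →₀ ℕ) : ℕ := d.sum fun k v => k * v

noncomputable def cf (d : ℕ →₀ ℕ) : ℚ := ∏ m ∈ d.support, ((d m).factorial : ℚ)⁻¹

lemma wt_single (j r : ℕ) : wt (Finsupp.single j r) = j * r := by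
  simp [wt, Finsupp.sum_single_index]

lemma wt_add (d e : ℕ →₀ ℕ) : wt (d + e) = wt d + wt e := by
  simp [wt, Finsupp.sum_add_index, Nat.mul_add]

lemma le_wt (d : ℕ →₀ ℕ) (k : ℕ) : k * d k ≤ wt d := by
  by_cases h : d k = 0
  · simp [h]
  · exact Finset.single_le_sum (f := fun k => k * d k) (fun i _ => Nat.zero_le _)
      (Finsupp.mem_support_iff.2 h)

lemma cf_over (d : ℕ →₀ ℕ) {s : Finset ℕ} (h : d.support ⊆ s) :
    cf d = ∏ m ∈ s, ((d m).factorial : ℚ)⁻¹ := by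
  unfold cf
  refine (Finset.prod_subset (f := fun m => ((d m).factorial : ℚ)⁻¹) h fun m _ hm => ?_)
  rw [Finsupp.notMem_support_iff.1 hm, Nat.factorial_zero, Nat.cast_one, inv_one]

lemma cf_add_single (d : ℕ →₀ ℕ) (j : ℕ) :
    cf (d + Finsupp.single j 1) * (d j + 1) = cf d := by
  set s := d.support ∪ (d + Finsupp.single j 1).support ∪ {j} with hs
  have hj : j ∈ s := by simp [hs]
  have h1 : cf d = ((d j).factorial : ℚ)⁻¹ * ∏ m ∈ s.erase j, ((d m).factorial : ℚ)⁻¹ := by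
    rw [cf_over d (s := s) (by intro x hx; rw [hs]; exact Finset.mem_union_left _ (Finset.mem_union_left _ hx))]
    exact (Finset.mul_prod_erase s _ hj).symm
  have h2 : cf (d + Finsupp.single j 1)
      = (((d j + 1).factorial : ℚ))⁻¹ * ∏ m ∈ s.erase j, ((d m).factorial : ℚ)⁻¹ := by
    rw [cf_over (d + Finsupp.single j 1) (s := s) (by intro x hx; rw [hs]; exact Finset.mem_union_left _ (Finset.mem_union_right _ hx))]
    rw [← Finset.mul_prod_erase s _ hj]
    congr 1
    · simp
    · refine Finset.prod_congr rfl fun m hm => ?_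
      have : m ≠ j := (Finset.mem_erase.1 hm).1
      simp [Finsupp.single_apply, this, Ne.symm this]
  rw [h1, h2, Nat.factorial_succ]
  push_cast
  have h0 : ((d j).factorial : ℚ) ≠ 0 := Nat.cast_ne_zero.2 (Nat.factorial_ne_zero _)
  field_simp

noncomputable def DD (n : ℕ) : Finset (ℕ →₀ ℕ) :=
  (((Finset.Icc 1 n).finsupp fun _ => Finset.range (n + 1))).filter fun d => wt d = n

lemma mem_DD {n : ℕ} {d : ℕ →₀ ℕ} : d ∈ DD n ↔ d 0 = 0 ∧ wt d = n := by
  constructor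
  · rintro hd
    rw [DD, Finset.mem_filter, Finset.mem_finsupp_iff] at hd
    obtain ⟨⟨hsupp, -⟩, hw⟩ := hd
    refine ⟨?_, hw⟩
    by_contra h0
    have := hsupp (Finsupp.mem_support_iff.2 h0)
    simp at this
  · rintro ⟨h0, hw⟩
    rw [DD, Finset.mem_filter, Finset.mem_finsupp_iff]
    have key : ∀ k, d k ≠ 0 → 1 ≤ k ∧ k ≤ n ∧ d k ≤ n := by
      intro k hk
      have hk1 : 1 ≤ k := by
        rcases Nat.eq_zero_or_pos k with h | h
        · exact absurd (h ▸ h0) hk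
        · exact h
      have h2 : k * d k ≤ n := hw ▸ le_wt d k
      have hdk : 1 ≤ d k := Nat.one_le_iff_ne_zero.2 hk
      exact ⟨hk1, le_trans (le_trans (Nat.le_mul_of_pos_right k hdk) h2) le_rfl,
        le_trans (le_trans (Nat.le_mul_of_pos_left (d k) hk1) h2) le_rfl⟩
    refine ⟨⟨fun k hk => ?_, fun k _ => ?_⟩, hw⟩
    · have := key k (Finsupp.mem_support_iff.1 hk)
      exact Finset.mem_Icc.2 ⟨this.1, this.2.1⟩
    · rcases Nat.eq_zero_or_pos (d k) with h | h
      · simp [h]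
      · exact Finset.mem_range.2 (Nat.lt_succ_of_le (key k (Nat.pos_iff_ne_zero.1 h)).2.2)

noncomputable def P (n : ℕ) : MvPolynomial ℕ ℚ := ∑ d ∈ DD n, monomial d (cf d)

lemma prod_monomial {ι : Type*} (s : Finset ι) (g : ι → (ℕ →₀ ℕ)) (a : ι → ℚ) :
    ∏ k ∈ s, (monomial (g k) (a k) : MvPolynomial ℕ ℚ)
      = monomial (∑ k ∈ s, g k) (∏ k ∈ s, a k) := by
  classical
  induction s using Finset.induction_on with
  | empty => simp
  | insert _ _ h ih =>
    rw [Finset.prod_insert h, Finset.sum_insert h, Finset.prod_insert h, ih, monomial_mul]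

lemma sum_single_apply {n : ℕ} (v : Fin n → ℕ) (m : ℕ) :
    (∑ j : Fin n, Finsupp.single (j.1 + 1) (v j)) m
      = ∑ j : Fin n, if j.1 + 1 = m then v j else 0 := by
  rw [Finsupp.finset_sum_apply]
  exact Finset.sum_congr rfl fun j _ => Finsupp.single_apply

lemma sum_single_apply_succ {n : ℕ} (v : Fin n → ℕ) (k : Fin n) :
    (∑ j : Fin n, Finsupp.single (j.1 + 1) (v j)) (k.1 + 1) = v k := by
  rw [sum_single_apply]
  rw [Finset.sum_eq_single k]
  · simp
  · intro j _ hj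
    simp only [Nat.add_right_cancel_iff, Fin.val_eq_val, ite_eq_right_iff]
    intro h; exact absurd h hj
  · simp

lemma sum_single_apply_zero {n : ℕ} (v : Fin n → ℕ) :
    (∑ j : Fin n, Finsupp.single (j.1 + 1) (v j)) 0 = 0 := by
  rw [sum_single_apply]; simp

lemma sum_single_apply_big {n : ℕ} (v : Fin n → ℕ) (m : ℕ) (hm : n < m) :
    (∑ j : Fin n, Finsupp.single (j.1 + 1) (v j)) m = 0 := by
  rw [sum_single_apply]
  refine Finset.sum_eq_zero fun j _ => ?_
  have : j.1 + 1 ≠ m := by omega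
  simp [this]

lemma dd_le {n : ℕ} {d : ℕ →₀ ℕ} (hd : d ∈ DD n) (m : ℕ) : d m ≤ n := by
  rcases Nat.eq_zero_or_pos m with h | h
  · rw [h, (mem_DD.1 hd).1]; exact Nat.zero_le _
  · calc d m ≤ m * d m := Nat.le_mul_of_pos_left _ h
      _ ≤ wt d := le_wt d m
      _ = n := (mem_DD.1 hd).2

lemma schur_eq (n : ℕ) : schur n = P n := by
  classical
  rw [schur, P, ← Finset.sum_filter]
  refine Finset.sum_nbij'
    (i := fun i : Fin n → Fin (n+1) => ∑ j : Fin n, Finsupp.single (j.1 + 1) (i j).1)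
    (j := fun d => fun k : Fin n =>
      (⟨min (d (k.1 + 1)) n, lt_of_le_of_lt (min_le_right _ _) (Nat.lt_succ_self n)⟩ : Fin (n+1)))
    ?_ ?_ ?_ ?_ ?_
  · intro i hi
    simp only [Finset.mem_filter, Finset.mem_univ, true_and] at hi
    rw [mem_DD]
    refine ⟨sum_single_apply_zero _, ?_⟩
    refine Eq.trans ?_ hi
    simp only [wt]
    rw [← Finsupp.sum_finset_sum_index (by intro a; exact Nat.mul_zero a)
      (by intro a b c; exact Nat.mul_add a b c)]
    refine Finset.sum_congr rfl fun j _ => ?_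
    rw [Finsupp.sum_single_index (Nat.mul_zero _)]
  · intro d hd
    refine Finset.mem_filter.2 ⟨Finset.mem_univ _, ?_⟩
    simp only
    have hle := dd_le hd
    calc ∑ k : Fin n, (k.1+1) * min (d (k.1+1)) n
        = ∑ k : Fin n, (k.1+1) * d (k.1+1) :=
          Finset.sum_congr rfl fun k _ => by rw [Nat.min_eq_left (hle _)]
      _ = ∑ m ∈ Finset.image (fun k : Fin n => k.1+1) Finset.univ, m * d m := by
          rw [Finset.sum_image (by intro a _ b _ h; exact Fin.ext (by simp only at h; omega))]
      _ = wt d := by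
          rw [wt, Finsupp.sum]
          refine (Finset.sum_subset ?_ ?_).symm
          · intro m hm
            rw [Finsupp.mem_support_iff] at hm
            rcases m with - | m
            · exact absurd (mem_DD.1 hd).1 hm
            · have h1 : m + 1 ≤ (m+1) * d (m+1) :=
                Nat.le_mul_of_pos_right _ (Nat.pos_of_ne_zero hm)
              have h2 := le_wt d (m+1)
              have h3 := (mem_DD.1 hd).2
              exact Finset.mem_image.2 ⟨⟨m, by omega⟩, Finset.mem_univ _, rfl⟩
          · intro m _ hm
            rw [Finsupp.notMem_support_iff.1 hm, Nat.mul_zero]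
      _ = n := (mem_DD.1 hd).2
  · intro i hi
    funext k
    ext
    simp only [sum_single_apply_succ]
    exact Nat.min_eq_left (Nat.le_of_lt_succ (i k).2)
  · intro d hd
    ext m
    have hle : ∀ m, d m ≤ n := dd_le hd
    rcases m with - | m
    · rw [sum_single_apply_zero, (mem_DD.1 hd).1]
    · by_cases hm : m < n
      · have := sum_single_apply_succ (n := n) (fun j => min (d (j.1+1)) n) ⟨m, hm⟩
        simp only at this ⊢
        rw [this]
        exact Nat.min_eq_left (hle _)
      · rw [sum_single_apply_big _ _ (by omega)]
        by_contra h
        have h2 : m + 1 ≤ (m+1) * d (m+1) := Nat.le_mul_of_pos_right _ (by omega)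
        have := le_wt d (m+1)
        have := (mem_DD.1 hd).2
        omega
  · intro i hi
    try simp only
    have : ∀ k : Fin n, (C (((i k).1.factorial : ℚ)⁻¹) * X (k.1 + 1) ^ ((i k).1) : MvPolynomial ℕ ℚ)
        = monomial (Finsupp.single (k.1+1) (i k).1) (((i k).1.factorial : ℚ)⁻¹) := by
      intro k
      rw [X_pow_eq_monomial, C_mul_monomial, mul_one]
    rw [Finset.prod_congr rfl fun k _ => this k, prod_monomial]
    congr 1
    rw [cf_over (s := Finset.image (fun k : Fin n => k.1 + 1) Finset.univ) _ ?_]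
    · rw [Finset.prod_image (by intro a _ b _ h; exact Fin.ext (by simp only at h; omega))]
      exact Finset.prod_congr rfl fun k _ => by rw [sum_single_apply_succ]
    · intro m hm
      rw [Finsupp.mem_support_iff] at hm
      rcases m with - | m
      · rw [sum_single_apply_zero] at hm; exact absurd rfl hm
      · by_cases h : m < n
        · exact Finset.mem_image.2 ⟨⟨m, h⟩, Finset.mem_univ _, rfl⟩
        · rw [sum_single_apply_big _ _ (by omega)] at hm; exact absurd rfl hm

lemma single_le_of_mem {d : ℕ →₀ ℕ} {k : ℕ} (hk : k ∈ d.support) :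
    Finsupp.single k 1 ≤ d := by
  rw [Finsupp.single_le_iff]
  exact Nat.one_le_iff_ne_zero.2 (Finsupp.mem_support_iff.1 hk)

lemma sub_single_add_cancel {d : ℕ →₀ ℕ} {k : ℕ} (hk : k ∈ d.support) :
    d - Finsupp.single k 1 + Finsupp.single k 1 = d :=
  tsub_add_cancel_of_le (single_le_of_mem hk)

lemma wt_sub_single {d : ℕ →₀ ℕ} {k : ℕ} (hk : k ∈ d.support) :
    wt (d - Finsupp.single k 1) + k = wt d := by
  conv_rhs => rw [← sub_single_add_cancel hk]
  rw [wt_add, wt_single, mul_one]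

lemma apply_sub_single_same {d : ℕ →₀ ℕ} {k : ℕ} (hk : k ∈ d.support) :
    (d - Finsupp.single k 1 : ℕ →₀ ℕ) k + 1 = d k := by
  rw [Finsupp.tsub_apply, Finsupp.single_apply, if_pos rfl]
  have := Nat.one_le_iff_ne_zero.2 (Finsupp.mem_support_iff.1 hk)
  omega

lemma cf_sub_single {d : ℕ →₀ ℕ} {k : ℕ} (hk : k ∈ d.support) :
    cf (d - Finsupp.single k 1) = cf d * (d k : ℚ) := by
  have h := cf_add_single (d - Finsupp.single k 1) k
  rw [sub_single_add_cancel hk] at h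
  rw [← h]
  congr 1
  exact_mod_cast apply_sub_single_same hk

lemma Tder_monomial (d : ℕ →₀ ℕ) (r : ℚ) :
    Tder (monomial d r) = ∑ k ∈ d.support,
      monomial (d - Finsupp.single k 1 + Finsupp.single (k+1) 1) (((k : ℚ) + 1) * d k * r) := by
  rw [Tder, mkDerivation_monomial, Finsupp.sum, Finset.smul_sum]
  refine Finset.sum_congr rfl fun k hk => ?_
  have h1 : ((k : MvPolynomial ℕ ℚ) + 1) = C ((k : ℚ) + 1) := by
    simp
  have hX : (X (k+1) : MvPolynomial ℕ ℚ) = monomial (Finsupp.single (k+1) 1) 1 := by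
    rw [← pow_one (X (k+1) : MvPolynomial ℕ ℚ), X_pow_eq_monomial]
  rw [h1, hX, C_mul_monomial, smul_eq_mul, monomial_mul, smul_monomial]
  congr 1
  rw [smul_eq_mul]
  ring

lemma hXP (n : ℕ) : X 1 * P n = ∑ d ∈ DD n, monomial (d + Finsupp.single 1 1) (cf d) := by
  rw [P, Finset.mul_sum]
  refine Finset.sum_congr rfl fun d _ => ?_
  have hX : (X 1 : MvPolynomial ℕ ℚ) = monomial (Finsupp.single 1 1) 1 := by
    rw [← pow_one (X 1 : MvPolynomial ℕ ℚ), X_pow_eq_monomial]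
  rw [hX, monomial_mul, one_mul, add_comm]

lemma hTP (n : ℕ) : Tder (P n) = ∑ d ∈ DD n, ∑ k ∈ d.support,
    monomial (d - Finsupp.single k 1 + Finsupp.single (k+1) 1) (((k : ℚ) + 1) * d k * cf d) := by
  rw [P, map_sum]
  exact Finset.sum_congr rfl fun d _ => Tder_monomial d (cf d)

lemma hRHS (n : ℕ) : ((n + 1 : ℕ) : MvPolynomial ℕ ℚ) * P (n+1)
    = ∑ d ∈ DD (n+1), ∑ m ∈ d.support, monomial d ((m : ℚ) * d m * cf d) := by
  rw [P, Finset.mul_sum]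
  refine Finset.sum_congr rfl fun d hd => ?_
  have h1 : ∑ m ∈ d.support, monomial d ((m : ℚ) * d m * cf d)
      = monomial d ((∑ m ∈ d.support, (m : ℚ) * d m) * cf d) := by
    rw [Finset.sum_mul, ← map_sum]
  have h2 : (∑ m ∈ d.support, (m : ℚ) * d m) = ((n + 1 : ℕ) : ℚ) := by
    rw [← (mem_DD.1 hd).2, wt, Finsupp.sum]
    push_cast
    rfl
  rw [h1, h2]
  have : ((n + 1 : ℕ) : MvPolynomial ℕ ℚ) = C ((n + 1 : ℕ) : ℚ) := by simp
  rw [this, C_mul_monomial]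

lemma part1 (n : ℕ) :
    ∑ d ∈ DD n, monomial (d + Finsupp.single 1 1) (cf d)
      = ∑ d' ∈ DD (n+1), ∑ m ∈ d'.support.filter (fun m => m = 1),
          monomial d' ((m : ℚ) * d' m * cf d') := by
  classical
  have hinner : ∀ d' : ℕ →₀ ℕ,
      (∑ m ∈ d'.support.filter (fun m => m = 1), monomial d' ((m : ℚ) * d' m * cf d'))
        = if d' 1 ≠ 0 then monomial d' ((1 : ℚ) * d' 1 * cf d') else 0 := by
    intro d'
    rw [Finset.filter_eq']
    by_cases h : d' 1 ≠ 0
    · rw [if_pos (Finsupp.mem_support_iff.2 h), if_pos h, Finset.sum_singleton, Nat.cast_one]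
    · rw [if_neg (by simpa using h), if_neg h, Finset.sum_empty]
  rw [Finset.sum_congr rfl fun d' _ => hinner d', ← Finset.sum_filter]
  refine Finset.sum_nbij' (i := fun d => d + Finsupp.single 1 1)
    (j := fun d' => d' - Finsupp.single 1 1) ?_ ?_ ?_ ?_ ?_
  · intro d hd
    obtain ⟨h0, hw⟩ := mem_DD.1 hd
    refine Finset.mem_filter.2 ⟨mem_DD.2 ⟨by simp [h0], ?_⟩, by simp⟩
    rw [wt_add, wt_single, hw]
  · intro d' hd'
    obtain ⟨hd', h1⟩ := Finset.mem_filter.1 hd'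
    obtain ⟨h0, hw⟩ := mem_DD.1 hd'
    have hm : 1 ∈ d'.support := Finsupp.mem_support_iff.2 h1
    refine mem_DD.2 ⟨by simp [Finsupp.tsub_apply, h0], ?_⟩
    have h2 := wt_sub_single hm
    show wt (d' - Finsupp.single 1 1) = n
    omega
  · intro d _
    show d + Finsupp.single 1 1 - Finsupp.single 1 1 = d
    ext m
    simp [Finsupp.tsub_apply]
  · intro d' hd'
    obtain ⟨-, h1⟩ := Finset.mem_filter.1 hd'
    exact sub_single_add_cancel (Finsupp.mem_support_iff.2 h1)
  · intro d hd
    congr 1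
    have happ : (d + Finsupp.single 1 1 : ℕ →₀ ℕ) 1 = d 1 + 1 := by simp
    have hc := cf_add_single d 1
    rw [happ, one_mul]
    push_cast
    linear_combination -hc

lemma part2 (n : ℕ) :
    (∑ d ∈ DD n, ∑ k ∈ d.support,
      monomial (d - Finsupp.single k 1 + Finsupp.single (k+1) 1) (((k : ℚ) + 1) * d k * cf d))
    = ∑ d' ∈ DD (n+1), ∑ m ∈ d'.support.filter (fun m => ¬ (m = 1)),
        monomial d' ((m : ℚ) * d' m * cf d') := by
  classical
  rw [Finset.sum_sigma', Finset.sum_sigma']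
  refine Finset.sum_nbij'
    (i := fun p : Σ _ : ℕ →₀ ℕ, ℕ =>
      ⟨p.1 - Finsupp.single p.2 1 + Finsupp.single (p.2 + 1) 1, p.2 + 1⟩)
    (j := fun q : Σ _ : ℕ →₀ ℕ, ℕ =>
      ⟨q.1 - Finsupp.single q.2 1 + Finsupp.single (q.2 - 1) 1, q.2 - 1⟩) ?_ ?_ ?_ ?_ ?_
  · rintro ⟨d, k⟩ hp
    obtain ⟨hd, hk⟩ := Finset.mem_sigma.1 hp
    dsimp only at hd hk ⊢
    obtain ⟨h0, hw⟩ := mem_DD.1 hd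
    have hk0 : k ≠ 0 := fun h => (Finsupp.mem_support_iff.1 hk) (h ▸ h0)
    refine Finset.mem_sigma.2 ⟨mem_DD.2 ⟨?_, ?_⟩, ?_⟩
    · simp [Finsupp.tsub_apply, h0, Finsupp.single_apply, Nat.pos_iff_ne_zero, hk0]
    · rw [wt_add, wt_single, mul_one]
      have h2 := wt_sub_single hk
      omega
    · refine Finset.mem_filter.2 ⟨Finsupp.mem_support_iff.2 ?_, by simpa using hk0⟩
      simp
  · rintro ⟨d', m⟩ hq
    obtain ⟨hd', hm⟩ := Finset.mem_sigma.1 hq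
    dsimp only at hd' hm ⊢
    obtain ⟨hm, hm1⟩ := Finset.mem_filter.1 hm
    obtain ⟨h0, hw⟩ := mem_DD.1 hd'
    have hm0 : m ≠ 0 := fun h => (Finsupp.mem_support_iff.1 hm) (h ▸ h0)
    have hm2 : 2 ≤ m := by omega
    refine Finset.mem_sigma.2 ⟨mem_DD.2 ⟨?_, ?_⟩, ?_⟩
    · have : m - 1 ≠ 0 := by omega
      simp [Finsupp.tsub_apply, h0, Finsupp.single_apply, this]
    · rw [wt_add, wt_single, mul_one]
      have h2 := wt_sub_single hm
      omega
    · exact Finsupp.mem_support_iff.2 (by simp)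
  · rintro ⟨d, k⟩ hp
    obtain ⟨hd, hk⟩ := Finset.mem_sigma.1 hp
    dsimp only at hd hk ⊢
    simp only [Nat.add_sub_cancel]
    rw [add_tsub_cancel_right, sub_single_add_cancel hk]
  · rintro ⟨d', m⟩ hq
    obtain ⟨hd', hm⟩ := Finset.mem_sigma.1 hq
    dsimp only at hd' hm ⊢
    obtain ⟨hm, hm1⟩ := Finset.mem_filter.1 hm
    have hm0 : m ≠ 0 := fun h =>
      (Finsupp.mem_support_iff.1 hm) (h ▸ (mem_DD.1 hd').1)
    have h1 : m - 1 + 1 = m := by omega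
    simp only [h1]
    rw [add_tsub_cancel_right, sub_single_add_cancel hm]
  · rintro ⟨d, k⟩ hp
    obtain ⟨hd, hk⟩ := Finset.mem_sigma.1 hp
    dsimp only at hd hk ⊢
    congr 1
    have happ : (d - Finsupp.single k 1 + Finsupp.single (k+1) 1 : ℕ →₀ ℕ) (k+1)
        = (d - Finsupp.single k 1 : ℕ →₀ ℕ) (k+1) + 1 := by
      rw [Finsupp.add_apply, Finsupp.single_apply, if_pos rfl]
    have c1 := cf_add_single (d - Finsupp.single k 1) (k+1)
    have c2 := cf_sub_single hk
    rw [happ]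
    push_cast at c1 c2 ⊢
    linear_combination (-(k : ℚ) - 1) * c1 + (-(k : ℚ) - 1) * c2

lemma P_zero : P 0 = 1 := by
  have h : DD 0 = {0} := by
    ext d
    rw [mem_DD, Finset.mem_singleton]
    constructor
    · rintro ⟨h0, hw⟩
      ext m
      rcases Nat.eq_zero_or_pos m with h | h
      · simp [h, h0]
      · have h1 := le_wt d m
        have h2 : m * d m = 0 := by omega
        rcases Nat.mul_eq_zero.1 h2 with h3 | h3
      
        · omega
        · simp [h3]
    · rintro rfl
      simp [wt]
  rw [P, h, Finset.sum_singleton]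
  have hc : cf 0 = 1 := by simp [cf]
  rw [hc, monomial_zero', C_1]

lemma recursion (n : ℕ) :
    X 1 * P n + Tder (P n) = ((n + 1 : ℕ) : MvPolynomial ℕ ℚ) * P (n+1) := by
  rw [hXP, hTP, hRHS, part1 n, part2 n, ← Finset.sum_add_distrib]
  exact Finset.sum_congr rfl fun d' _ => Finset.sum_filter_add_sum_filter_not _ _ _

lemma schur_rec (n : ℕ) : X 1 * schur n + Tder (schur n)
    = ((n + 1 : ℕ) : MvPolynomial ℕ ℚ) * schur (n + 1) := by
  rw [schur_eq, schur_eq]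
  exact recursion n

/-- `n! S_n = (M_{y₁} + T)ⁿ (1)`; equivalently `(M_{y₁} + T)(S_{n-1}) = n S_n` for `n ≥ 1`. -/
theorem stmt7 :
    (∀ n : ℕ, (n.factorial : MvPolynomial ℕ ℚ) * schur n
        = (fun q => X 1 * q + Tder q)^[n] 1)
    ∧ ∀ n : ℕ, 1 ≤ n →
        X 1 * schur (n - 1) + Tder (schur (n - 1)) = (n : MvPolynomial ℕ ℚ) * schur n := by
  have hC : ∀ (m : ℕ) (p : MvPolynomial ℕ ℚ), (m : MvPolynomial ℕ ℚ) * p = (m : ℚ) • p := by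
    intro m p
    rw [smul_eq_C_mul]
    norm_cast
  constructor
  · intro n
    induction n with
    | zero =>
      simp only [Nat.factorial_zero, Nat.cast_one, one_mul, Function.iterate_zero, id_eq]
      rw [schur_eq, P_zero]
    | succ n ih =>
      rw [Function.iterate_succ_apply', ← ih]
      show ((n+1).factorial : MvPolynomial ℕ ℚ) * schur (n+1)
        = X 1 * ((n.factorial : MvPolynomial ℕ ℚ) * schur n)
          + Tder ((n.factorial : MvPolynomial ℕ ℚ) * schur n)
      rw [hC n.factorial, mul_smul_comm, Derivation.map_smul, ← smul_add, schur_rec n,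
        hC (n+1), hC ((n+1).factorial), smul_smul]
      congr 1
      push_cast [Nat.factorial_succ]
      ring
  · intro n hn
    cases n with
    | zero => omega
    | succ m => simpa using schur_rec m
end

section
/- Let β ∈ ℂ. Let B = A[λ] be the polynomial ring in one further variable λ over A, extend T to a derivation of B by setting T(λ) = 0, and let L := M_λ + T + β·M_{h₀} be the ℂ-linear operator on B, where M_λ and M_{h₀} denote multiplication by λ and by h₀ respectively. For d ≥ 0 set P_d := L^d(1). Let ι : A → A be the ℂ-algebra automorphism with ι(h_k) = −h_k for all k ≥ 0, and define the ℂ-linear map σ : B → B by σ(a·λⁿ) := (−M_λ − T)ⁿ(ι(a)) for a ∈ A and n ≥ 0 (this is the substitution λ ↦ −λ−T, h_k ↦ −h_k, well defined since B is a free A-module with basis {λⁿ}). Then σ(P_d) = (−1)^d·P_d for every d ≥ 0. -/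
/- `A = ℂ[h₀,h₁,h₂,…] = MvPolynomial ℕ ℂ` with the derivation `T`, `T(h_k) = h_{k+1}`;
`B = A[λ] = Polynomial A`. -/

/-- The derivation `T` of `A = ℂ[h₀,h₁,…]` with `T(h_k) = h_{k+1}`. -/
noncomputable def TA : Derivation ℂ (MvPolynomial ℕ ℂ) (MvPolynomial ℕ ℂ) :=
  MvPolynomial.mkDerivation ℂ fun k => MvPolynomial.X (k + 1)

/-- The extension of `T` to `B = A[λ]` with `T(λ) = 0` (acting on coefficients). -/
noncomputable def TB (p : Polynomial (MvPolynomial ℕ ℂ)) : Polynomial (MvPolynomial ℕ ℂ) :=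
  p.sum fun n a => Polynomial.C (TA a) * Polynomial.X ^ n

/-- The operator `L = M_λ + T + β·M_{h₀}` on `B`. -/
noncomputable def Lop (β : ℂ) (p : Polynomial (MvPolynomial ℕ ℂ)) :
    Polynomial (MvPolynomial ℕ ℂ) :=
  Polynomial.X * p + TB p + Polynomial.C (MvPolynomial.C β * MvPolynomial.X 0) * p

/-- The `ℂ`-algebra automorphism `ι` of `A` with `ι(h_k) = -h_k`. -/
noncomputable def iotaA : MvPolynomial ℕ ℂ →ₐ[ℂ] MvPolynomial ℕ ℂ :=
  MvPolynomial.aeval fun k => -MvPolynomial.X k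

/-- The `ℂ`-linear map `σ : B → B` with `σ(a·λⁿ) = (-M_λ - T)ⁿ (ι a)`
(the substitution `λ ↦ -λ-T`, `h_k ↦ -h_k`). -/
noncomputable def sigmaB (p : Polynomial (MvPolynomial ℕ ℂ)) :
    Polynomial (MvPolynomial ℕ ℂ) :=
  p.sum fun n a => (fun q => -(Polynomial.X * q) - TB q)^[n] (Polynomial.C (iotaA a))

/-! ### Auxiliary material -/

section Aux

open Polynomial

local notation "A'" => MvPolynomial ℕ ℂ
local notation "B'" => Polynomial (MvPolynomial ℕ ℂ)

lemma TA_C (β : ℂ) : TA (MvPolynomial.C β) = 0 := by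
  rw [MvPolynomial.C_eq_smul_one, Derivation.map_smul, Derivation.map_one_eq_zero, smul_zero]

lemma TA_X (k : ℕ) : TA (MvPolynomial.X k) = MvPolynomial.X (k + 1) :=
  MvPolynomial.mkDerivation_X ℂ _ k

lemma TA_mul (a b : A') : TA (a * b) = a * TA b + b * TA a := by
  rw [Derivation.leibniz]; simp [smul_eq_mul]

lemma iota_TA (a : A') : iotaA (TA a) = TA (iotaA a) := by
  induction a using MvPolynomial.induction_on with
  | C r => simp [iotaA, TA_C]
  | add p q hp hq => simp only [map_add, hp, hq]
  | mul_X p k hp =>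
      rw [TA_mul, map_add, map_mul, map_mul, hp, TA_X]
      simp [iotaA, TA_X]
      ring

lemma iota_X (k : ℕ) : iotaA (MvPolynomial.X k) = -MvPolynomial.X k := by simp [iotaA]

lemma iota_C (β : ℂ) : iotaA (MvPolynomial.C β) = MvPolynomial.C β := by simp [iotaA]

/-- The operator `S = -λ - T` on `B`. -/
noncomputable def Sop (q : Polynomial (MvPolynomial ℕ ℂ)) : Polynomial (MvPolynomial ℕ ℂ) :=
  -(Polynomial.X * q) - TB q

/-- The operator `E = Σ_k (h_k/k!) ∂_λ^k` on `B`, written on monomials. -/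
noncomputable def Eop (p : Polynomial (MvPolynomial ℕ ℂ)) : Polynomial (MvPolynomial ℕ ℂ) :=
  p.sum fun n a => ∑ k ∈ Finset.range (n + 1),
    (n.choose k) • Polynomial.monomial (n - k) (MvPolynomial.X k * a)

/-! #### `TB` basics -/

lemma TB_monomial (n : ℕ) (a : A') : TB (monomial n a) = monomial n (TA a) := by
  unfold TB
  rw [Polynomial.sum_monomial_index]
  · rw [Polynomial.C_mul_X_pow_eq_monomial]
  · simp

lemma TB_add (p q : B') : TB (p + q) = TB p + TB q := by
  unfold TB
  apply Polynomial.sum_add_index <;> intros <;> simp [add_mul]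

lemma TB_zero : TB 0 = 0 := by simp [TB]

noncomputable def TBh : B' →+ B' where
  toFun := TB
  map_zero' := TB_zero
  map_add' := TB_add

lemma TBh_apply (p : B') : TBh p = TB p := rfl

lemma TB_neg (p : B') : TB (-p) = -TB p := map_neg TBh p

lemma TB_X_mul (p : B') : TB (Polynomial.X * p) = Polynomial.X * TB p := by
  induction p using Polynomial.induction_on' with
  | add p q hp hq => rw [mul_add, TB_add, hp, hq, TB_add, mul_add]
  | monomial n a => rw [Polynomial.X_mul_monomial, TB_monomial, TB_monomial,
      Polynomial.X_mul_monomial]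

lemma TB_C_mul (b : A') (p : B') :
    TB (Polynomial.C b * p) = Polynomial.C (TA b) * p + Polynomial.C b * TB p := by
  induction p using Polynomial.induction_on' with
  | add p q hp hq =>
      rw [mul_add, TB_add, hp, hq, TB_add]; ring
  | monomial n a =>
      rw [Polynomial.C_mul_monomial, TB_monomial, TB_monomial, TA_mul,
        Polynomial.C_mul_monomial, Polynomial.C_mul_monomial]
      rw [map_add]
      ring_nf

lemma TB_one : TB 1 = 0 := by
  have h : (1 : B') = monomial 0 1 := by simp
  rw [h, TB_monomial, Derivation.map_one_eq_zero, map_zero]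

/-! #### `Eop` basics -/

lemma Eop_monomial (n : ℕ) (a : A') :
    Eop (monomial n a) = ∑ k ∈ Finset.range (n + 1),
      (n.choose k) • Polynomial.monomial (n - k) (MvPolynomial.X k * a) := by
  unfold Eop
  rw [Polynomial.sum_monomial_index]
  simp

lemma Eop_add (p q : B') : Eop (p + q) = Eop p + Eop q := by
  unfold Eop
  apply Polynomial.sum_add_index <;> intros <;>
    simp [mul_add, smul_add, Finset.sum_add_distrib]

noncomputable def Eh : B' →+ B' where
  toFun := Eop
  map_zero' := by simp [Eop]
  map_add' := Eop_add

lemma Eh_apply (p : B') : Eh p = Eop p := rfl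

lemma Eop_neg (p : B') : Eop (-p) = -Eop p := map_neg Eh p

lemma Eop_C_mul (c : A') (p : B') : Eop (Polynomial.C c * p) = Polynomial.C c * Eop p := by
  induction p using Polynomial.induction_on' with
  | add p q hp hq => rw [mul_add, Eop_add, hp, hq, Eop_add, mul_add]
  | monomial n a =>
      rw [Polynomial.C_mul_monomial, Eop_monomial, Eop_monomial, Finset.mul_sum]
      apply Finset.sum_congr rfl
      intro k _
      rw [mul_smul_comm, Polynomial.C_mul_monomial]
      ring_nf

lemma Eop_one : Eop 1 = Polynomial.C (MvPolynomial.X 0) := by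
  have h : (1 : B') = monomial 0 1 := by simp
  rw [h, Eop_monomial]
  simp

/-! #### The key commutation `[E, λ + T] = 0` -/

lemma Eop_key (p : B') :
    Eop (Polynomial.X * p + TB p) = Polynomial.X * Eop p + TB (Eop p) := by
  induction p using Polynomial.induction_on' with
  | add p q hp hq =>
      have h : Polynomial.X * (p + q) + TB (p + q)
          = (Polynomial.X * p + TB p) + (Polynomial.X * q + TB q) := by
        rw [TB_add]; ring
      rw [h, Eop_add, hp, hq, Eop_add, TB_add]; ring
  | monomial n a =>
      have hR1 : ∀ k ∈ Finset.range (n + 1),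
          Polynomial.X * ((n.choose k) • monomial (n - k) (MvPolynomial.X k * a))
          = (n.choose k) • monomial (n + 1 - k) (MvPolynomial.X k * a) := by
        intro k hk
        rw [Finset.mem_range] at hk
        rw [mul_smul_comm, Polynomial.X_mul_monomial, Nat.succ_sub (Nat.lt_succ_iff.mp hk)]
      have hR2 : ∀ k ∈ Finset.range (n + 1),
          TB ((n.choose k) • monomial (n - k) (MvPolynomial.X k * a))
          = (n.choose k) • monomial (n - k) (MvPolynomial.X (k + 1) * a)
            + (n.choose k) • monomial (n - k) (MvPolynomial.X k * TA a) := by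
        intro k _
        rw [← TBh_apply, map_nsmul, TBh_apply, TB_monomial, TA_mul, TA_X]
        rw [show MvPolynomial.X k * TA a + a * MvPolynomial.X (k + 1)
            = MvPolynomial.X (k + 1) * a + MvPolynomial.X k * TA a by ring]
        rw [map_add, smul_add]
      rw [Polynomial.X_mul_monomial, TB_monomial, Eop_add, Eop_monomial, Eop_monomial,
        Eop_monomial, Finset.mul_sum]
      rw [← TBh_apply, map_sum]
      simp only [TBh_apply]
      rw [Finset.sum_congr rfl hR1, Finset.sum_congr rfl hR2, Finset.sum_add_distrib]
      have main :
          (∑ k ∈ Finset.range (n + 1 + 1),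
              ((n + 1).choose k) • monomial (n + 1 - k) (MvPolynomial.X k * a))
          = (∑ k ∈ Finset.range (n + 1),
              (n.choose k) • monomial (n + 1 - k) (MvPolynomial.X k * a))
            + ∑ k ∈ Finset.range (n + 1),
              (n.choose k) • monomial (n - k) (MvPolynomial.X (k + 1) * a) := by
        rw [Finset.sum_range_succ' (fun k =>
          ((n + 1).choose k) • monomial (n + 1 - k) (MvPolynomial.X k * a)) (n + 1)]
        rw [Finset.sum_range_succ' (fun k =>
          (n.choose k) • monomial (n + 1 - k) (MvPolynomial.X k * a)) n]
        simp only [Nat.choose_succ_succ, Nat.succ_sub_succ_eq_sub, add_smul,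
          Nat.choose_zero_right, one_smul, Nat.sub_zero]
        rw [Finset.sum_add_distrib]
        rw [Finset.sum_range_succ (fun k =>
          (n.choose (k + 1)) • monomial (n - k) (MvPolynomial.X (k + 1) * a)) n]
        rw [Nat.choose_succ_self, zero_smul, add_zero]
        abel
      rw [main]
      abel

/-! #### `Sop` basics -/

lemma Sop_zero : Sop 0 = 0 := by simp [Sop, TB_zero]

lemma Sop_add (p q : B') : Sop (p + q) = Sop p + Sop q := by
  simp only [Sop, TB_add]; ring

lemma Sop_neg (p : B') : Sop (-p) = -Sop p := by
  simp only [Sop, TB_neg]; ring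

lemma Sop_iter_zero (n : ℕ) : Sop^[n] 0 = 0 := Function.iterate_fixed Sop_zero n

lemma Sop_iter_add (n : ℕ) (p q : B') : Sop^[n] (p + q) = Sop^[n] p + Sop^[n] q := by
  induction n generalizing p q with
  | zero => rfl
  | succ n ih => simp only [Function.iterate_succ_apply', ih, Sop_add]

lemma Sop_iter_neg (n : ℕ) (p : B') : Sop^[n] (-p) = -Sop^[n] p := by
  induction n generalizing p with
  | zero => rfl
  | succ n ih => simp only [Function.iterate_succ_apply', ih, Sop_neg]

lemma TB_Sop (q : B') : TB (Sop q) = Sop (TB q) := by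
  have h : Sop q = -(Polynomial.X * q) + -(TB q) := by unfold Sop; ring
  rw [h, TB_add, TB_neg, TB_neg, TB_X_mul]
  unfold Sop; ring

lemma Eop_Sop (q : B') : Eop (Sop q) = Sop (Eop q) := by
  have h : Sop q = -(Polynomial.X * q + TB q) := by unfold Sop; ring
  rw [h, Eop_neg, Eop_key]
  unfold Sop; ring

lemma Cc_Sop (c : MvPolynomial ℕ ℂ) (hc : TA c = 0) (q : B') :
    Polynomial.C c * Sop q = Sop (Polynomial.C c * q) := by
  unfold Sop
  rw [TB_C_mul, hc]
  simp only [Polynomial.C_0, zero_mul, zero_add]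
  ring

lemma iter_comm (O : B' → B') (h : ∀ q, O (Sop q) = Sop (O q)) (n : ℕ) (q : B') :
    O (Sop^[n] q) = Sop^[n] (O q) := by
  induction n generalizing q with
  | zero => rfl
  | succ n ih => simp only [Function.iterate_succ_apply', h, ih]

/-! #### `sigmaB` basics -/

lemma sigma_def (p : B') :
    sigmaB p = p.sum fun n a => Sop^[n] (Polynomial.C (iotaA a)) := rfl

lemma sigma_monomial (n : ℕ) (a : A') :
    sigmaB (monomial n a) = Sop^[n] (Polynomial.C (iotaA a)) := by
  rw [sigma_def, Polynomial.sum_monomial_index]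
  simp [Sop_iter_zero]

lemma sigma_add (p q : B') : sigmaB (p + q) = sigmaB p + sigmaB q := by
  rw [sigma_def, sigma_def, sigma_def]
  apply Polynomial.sum_add_index
  · intro i; simp [Sop_iter_zero]
  · intro i a b; rw [map_add, Polynomial.C_add, Sop_iter_add]

lemma sigma_one : sigmaB 1 = 1 := by
  have h : (1 : B') = monomial 0 1 := by simp
  rw [h, sigma_monomial]
  simp

lemma sigma_X_mul (p : B') : sigmaB (Polynomial.X * p) = Sop (sigmaB p) := by
  induction p using Polynomial.induction_on' with
  | add p q hp hq => rw [mul_add, sigma_add, hp, hq, sigma_add, Sop_add]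
  | monomial n a =>
      rw [Polynomial.X_mul_monomial, sigma_monomial, sigma_monomial,
        Function.iterate_succ_apply']

lemma sigma_TB (p : B') : sigmaB (TB p) = TB (sigmaB p) := by
  induction p using Polynomial.induction_on' with
  | add p q hp hq => rw [TB_add, sigma_add, hp, hq, sigma_add, TB_add]
  | monomial n a =>
      rw [TB_monomial, sigma_monomial, sigma_monomial, iota_TA]
      rw [show Polynomial.C (TA (iotaA a)) = TB (Polynomial.C (iotaA a)) from by
        simp only [← Polynomial.monomial_zero_left, TB_monomial]]
      rw [iter_comm TB TB_Sop n]

lemma Eop_C (b : A') : Eop (Polynomial.C b) = Polynomial.C (MvPolynomial.X 0 * b) := by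
  rw [← Polynomial.monomial_zero_left, Eop_monomial]
  simp

lemma sigma_h0 (p : B') :
    sigmaB (Polynomial.C (MvPolynomial.X 0) * p) = -Eop (sigmaB p) := by
  induction p using Polynomial.induction_on' with
  | add p q hp hq => rw [mul_add, sigma_add, hp, hq, sigma_add, Eop_add]; ring
  | monomial n a =>
      rw [Polynomial.C_mul_monomial, sigma_monomial, sigma_monomial]
      rw [show iotaA (MvPolynomial.X 0 * a) = -(MvPolynomial.X 0 * iotaA a) by
        rw [map_mul, iota_X]; ring]
      rw [Polynomial.C_neg, Sop_iter_neg, ← Eop_C, iter_comm Eop Eop_Sop n]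

lemma sigma_Cbeta (β : ℂ) (p : B') :
    sigmaB (Polynomial.C (MvPolynomial.C β) * p)
      = Polynomial.C (MvPolynomial.C β) * sigmaB p := by
  induction p using Polynomial.induction_on' with
  | add p q hp hq => rw [mul_add, sigma_add, hp, hq, sigma_add, mul_add]
  | monomial n a =>
      rw [Polynomial.C_mul_monomial, sigma_monomial, sigma_monomial,
        iter_comm (fun q => Polynomial.C (MvPolynomial.C β) * q)
          (fun q => Cc_Sop (MvPolynomial.C β) (TA_C β) q) n]
      rw [map_mul, iota_C, Polynomial.C_mul]

/-! #### The kernel lemma: `(T + βh₀ - βE) P_d = 0` -/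

lemma NP (β : ℂ) (d : ℕ) :
    TB ((Lop β)^[d] 1)
      + Polynomial.C (MvPolynomial.C β * MvPolynomial.X 0) * (Lop β)^[d] 1
    = Polynomial.C (MvPolynomial.C β) * Eop ((Lop β)^[d] 1) := by
  induction d with
  | zero =>
      simp only [Function.iterate_zero_apply, TB_one, Eop_one, mul_one, zero_add]
      rw [Polynomial.C_mul]
  | succ d ih =>
      rw [Function.iterate_succ_apply']
      set P := (Lop β)^[d] 1 with hP
      have hX1 : TA (MvPolynomial.C β * MvPolynomial.X 0)
          = MvPolynomial.C β * MvPolynomial.X 1 := by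
        rw [TA_mul, TA_C, TA_X]; simp
      have hT : TB (Lop β P) = Polynomial.X * TB P + TB (TB P)
          + Polynomial.C (MvPolynomial.C β * MvPolynomial.X 1) * P
          + Polynomial.C (MvPolynomial.C β * MvPolynomial.X 0) * TB P := by
        show TB (Polynomial.X * P + TB P
          + Polynomial.C (MvPolynomial.C β * MvPolynomial.X 0) * P) = _
        rw [TB_add, TB_add, TB_X_mul, TB_C_mul, hX1]; ring
      have hE : Eop (Lop β P) = Polynomial.X * Eop P + TB (Eop P)
          + Polynomial.C (MvPolynomial.C β * MvPolynomial.X 0) * Eop P := by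
        show Eop (Polynomial.X * P + TB P
          + Polynomial.C (MvPolynomial.C β * MvPolynomial.X 0) * P) = _
        rw [Eop_add, Eop_key, Eop_C_mul]
      have hTB2 : TB (TB P + Polynomial.C (MvPolynomial.C β * MvPolynomial.X 0) * P)
          = TB (Polynomial.C (MvPolynomial.C β) * Eop P) := congrArg TB ih
      rw [TB_add, TB_C_mul, hX1] at hTB2
      rw [TB_C_mul, TA_C] at hTB2
      simp only [Polynomial.C_0, zero_mul, zero_add] at hTB2
      rw [hT, hE]
      rw [show Lop β P = Polynomial.X * P + TB P
        + Polynomial.C (MvPolynomial.C β * MvPolynomial.X 0) * P from rfl]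
      linear_combination (Polynomial.X
        + Polynomial.C (MvPolynomial.C β * MvPolynomial.X 0)) * ih + hTB2

end Aux

/-- For `P_d = L^d(1)` one has `σ(P_d) = (-1)^d · P_d`. -/
theorem stmt9 (β : ℂ) (d : ℕ) :
    sigmaB ((Lop β)^[d] 1) = (-1 : Polynomial (MvPolynomial ℕ ℂ)) ^ d * (Lop β)^[d] 1 := by
  induction d with
  | zero => simp [sigma_one]
  | succ d ih =>
      rw [Function.iterate_succ_apply']
      set P := (Lop β)^[d] 1 with hP
      have hnp := NP β d
      rw [← hP] at hnp
      have hσL : sigmaB (Lop β P) = Sop (sigmaB P) + TB (sigmaB P)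
          + Polynomial.C (MvPolynomial.C β) * (-Eop (sigmaB P)) := by
        rw [show Lop β P = Polynomial.X * P + TB P
          + Polynomial.C (MvPolynomial.C β * MvPolynomial.X 0) * P from rfl]
        rw [sigma_add, sigma_add, sigma_X_mul, sigma_TB]
        rw [show Polynomial.C (MvPolynomial.C β * MvPolynomial.X 0)
          = Polynomial.C (MvPolynomial.C β) * Polynomial.C (MvPolynomial.X 0) from by
            rw [Polynomial.C_mul]]
        rw [mul_assoc, sigma_Cbeta, sigma_h0]
      rw [hσL, ih]
      rcases Nat.even_or_odd d with hpar | hpar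
      · rw [show ((-1 : Polynomial (MvPolynomial ℕ ℂ))) ^ d = 1 from Even.neg_one_pow (α := Polynomial (MvPolynomial ℕ ℂ)) hpar,
          one_mul, pow_succ,
          show ((-1 : Polynomial (MvPolynomial ℕ ℂ))) ^ d = 1 from Even.neg_one_pow (α := Polynomial (MvPolynomial ℕ ℂ)) hpar, one_mul]
        rw [show Sop P = -(Polynomial.X * P) - TB P from rfl]
        rw [show Lop β P = Polynomial.X * P + TB P
          + Polynomial.C (MvPolynomial.C β * MvPolynomial.X 0) * P from rfl]
        linear_combination hnp
      · rw [show ((-1 : Polynomial (MvPolynomial ℕ ℂ))) ^ d = -1 from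
            Odd.neg_one_pow (α := Polynomial (MvPolynomial ℕ ℂ)) hpar, pow_succ,
          show ((-1 : Polynomial (MvPolynomial ℕ ℂ))) ^ d = -1 from
            Odd.neg_one_pow (α := Polynomial (MvPolynomial ℕ ℂ)) hpar]
        have hneg : ∀ q : Polynomial (MvPolynomial ℕ ℂ),
            (-1 : Polynomial (MvPolynomial ℕ ℂ)) * q = -q := fun q => by ring
        simp only [hneg, neg_neg, one_mul]
        rw [Sop_neg, TB_neg, Eop_neg]
        rw [show Sop P = -(Polynomial.X * P) - TB P from rfl]
        rw [show Lop β P = Polynomial.X * P + TB P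
          + Polynomial.C (MvPolynomial.C β * MvPolynomial.X 0) * P from rfl]
        linear_combination -hnp
end

section
/- Let d ≥ 1 and let Q ∈ ℂ[y₁,…,y_d] be a polynomial homogeneous of degree d for the grading deg y_k = k, satisfying ∂Q/∂y_k = ∂^kQ/∂y₁^k for all k = 1, …, d. Then Q = γ·S_d(y₁,…,y_d), where γ ∈ ℂ is the coefficient of the monomial y_d in Q. -/
open MvPolynomial Finset

lemma coeff_pderiv' {R : Type*} [CommSemiring R] (k : ℕ) (m : ℕ →₀ ℕ) (p : MvPolynomial ℕ R) :
    coeff m (pderiv k p) = ((m k + 1 : ℕ) : R) * coeff (m + Finsupp.single k 1) p := by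
  induction p using MvPolynomial.induction_on' with
  | add p q hp hq => simp [hp, hq, mul_add]
  | monomial s a =>
    rw [pderiv_monomial, coeff_monomial, coeff_monomial]
    by_cases h : s = m + Finsupp.single k 1
    · have h1 : s - Finsupp.single k 1 = m := by simp [h]
      have h2 : s k = m k + 1 := by simp [h]
      simp [h, h1, h2, mul_comm]
    · rw [if_neg h]
      by_cases h0 : s k = 0
      · by_cases h1 : s - Finsupp.single k 1 = m <;> simp [h1, h0]
      · have h1 : s - Finsupp.single k 1 ≠ m := by
          intro hm
          apply h
          rw [← hm, tsub_add_cancel_of_le]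
          exact Finsupp.single_le_iff.mpr (Nat.one_le_iff_ne_zero.mpr h0)
        simp [h1]

lemma coeff_iter_pderiv {R : Type*} [CommSemiring R] (k : ℕ) (m : ℕ →₀ ℕ) (p : MvPolynomial ℕ R) :
    coeff m ((fun q => pderiv 1 q)^[k] p)
      = ((∏ j ∈ Finset.range k, (m 1 + j + 1) : ℕ) : R) * coeff (m + Finsupp.single 1 k) p := by
  induction k generalizing p with
  | zero => simp
  | succ n ih =>
    rw [Function.iterate_succ_apply, ih (pderiv 1 p), coeff_pderiv']
    have h2 : m + Finsupp.single 1 n + Finsupp.single 1 1 = m + Finsupp.single 1 (n + 1) := by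
      rw [add_assoc, ← Finsupp.single_add]
    rw [h2, Finset.prod_range_succ, ← mul_assoc]
    simp only [Finsupp.add_apply, Finsupp.single_eq_same]
    push_cast
    ring

lemma factorial_add_prod (a k : ℕ) :
    (a + k).factorial = a.factorial * ∏ j ∈ Finset.range k, (a + j + 1) := by
  induction k with
  | zero => simp
  | succ n ih =>
    rw [Finset.prod_range_succ, ← mul_assoc, ← ih, ← Nat.add_assoc, Nat.factorial_succ, mul_comm]

lemma prod_fin_icc (d : ℕ) {M : Type*} [CommMonoid M] (f : ℕ → M) :
    ∏ k : Fin d, f (k.1 + 1) = ∏ j ∈ Finset.Icc 1 d, f j := by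
  apply Finset.prod_bij (fun (k : Fin d) _ => k.1 + 1)
  · intro k _; simp only [Finset.mem_Icc]; omega
  · intro a _ b _ h; exact Fin.ext (by omega)
  · intro j hj
    simp only [Finset.mem_Icc] at hj
    exact ⟨⟨j - 1, by omega⟩, Finset.mem_univ _, by simp; omega⟩
  · intro k _; rfl

lemma sum_fin_icc (d : ℕ) {M : Type*} [AddCommMonoid M] (f : ℕ → M) :
    ∑ k : Fin d, f (k.1 + 1) = ∑ j ∈ Finset.Icc 1 d, f j :=
  prod_fin_icc (M := Multiplicative M) d f

lemma weight_eq_sum (d : ℕ) (m : ℕ →₀ ℕ) (hs : ∀ j, m j ≠ 0 → 1 ≤ j ∧ j ≤ d) :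
    Finsupp.weight (fun k : ℕ => k) m = ∑ j ∈ Finset.Icc 1 d, j * m j := by
  rw [Finsupp.weight_apply, Finsupp.sum_of_support_subset m
    (s := Finset.Icc 1 d) ?_ _ (by intros; simp)]
  · exact Finset.sum_congr rfl fun j _ => by simp [mul_comm]
  · intro j hj
    rw [Finsupp.mem_support_iff] at hj
    exact Finset.mem_Icc.mpr (hs j hj)

lemma weight_single (a b : ℕ) :
    Finsupp.weight (fun k : ℕ => k) (Finsupp.single a b) = b * a := by
  rw [Finsupp.weight_apply, Finsupp.sum_single_index] <;> simp

noncomputable def SF (d : ℕ) (i : Fin d → Fin (d + 1)) : ℕ →₀ ℕ :=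
  ∑ k : Fin d, Finsupp.single (k.1 + 1) (i k).1

lemma SF_apply (d : ℕ) (i : Fin d → Fin (d + 1)) (j : ℕ) :
    SF d i j = ∑ k : Fin d, if k.1 + 1 = j then (i k).1 else 0 := by
  simp [SF, Finsupp.finset_sum_apply, Finsupp.single_apply]

lemma SF_apply_succ (d : ℕ) (i : Fin d → Fin (d + 1)) (k : Fin d) :
    SF d i (k.1 + 1) = (i k).1 := by
  rw [SF_apply, Finset.sum_eq_single k]
  · simp
  · intro b _ hb
    rw [if_neg]
    intro h
    exact hb (Fin.ext (by omega))
  · simp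

lemma SF_apply_ne (d : ℕ) (i : Fin d → Fin (d + 1)) {j : ℕ}
    (hj : ∀ k : Fin d, k.1 + 1 ≠ j) : SF d i j = 0 := by
  rw [SF_apply]
  exact Finset.sum_eq_zero fun k _ => if_neg (hj k)

lemma schur_eq_s15 (d : ℕ) : schur d = ∑ i : Fin d → Fin (d + 1),
    if (∑ k : Fin d, (k.1 + 1) * (i k).1) = d then
      monomial (SF d i) (∏ k : Fin d, ((i k).1.factorial : ℚ)⁻¹)
    else 0 := by
  unfold schur
  apply Finset.sum_congr rfl
  intro i _
  split_ifs with hc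
  · rw [Finset.prod_mul_distrib]
    simp only [X_pow_eq_monomial]
    rw [SF, monomial_sum_index, map_prod (C : ℚ →+* MvPolynomial ℕ ℚ)]
  · rfl

lemma coeff_schur_of (d : ℕ) (m : ℕ →₀ ℕ)
    (h0 : ∀ j, (∀ k : Fin d, k.1 + 1 ≠ j) → m j = 0)
    (hw : ∑ k : Fin d, (k.1 + 1) * m (k.1 + 1) = d) :
    coeff m (schur d) = ∏ k : Fin d, ((m (k.1 + 1)).factorial : ℚ)⁻¹ := by
  have hle : ∀ k : Fin d, m (k.1 + 1) < d + 1 := by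
    intro k
    have h1 := Finset.single_le_sum (f := fun k : Fin d => (k.1 + 1) * m (k.1 + 1))
        (fun _ _ => Nat.zero_le _) (Finset.mem_univ k)
    have h2 : m (k.1 + 1) ≤ (k.1 + 1) * m (k.1 + 1) := Nat.le_mul_of_pos_left _ (by omega)
    exact Nat.lt_succ_of_le (h2.trans (h1.trans hw.le))
  set i₀ : Fin d → Fin (d + 1) := fun k => ⟨m (k.1 + 1), hle k⟩ with hi₀
  have hm : SF d i₀ = m := Finsupp.ext fun j => by
    by_cases hj : ∃ k : Fin d, k.1 + 1 = j
    · obtain ⟨k, rfl⟩ := hj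
      rw [SF_apply_succ]
    · push_neg at hj
      rw [SF_apply_ne d i₀ hj, h0 j hj]
  rw [schur_eq_s15, coeff_sum, Finset.sum_eq_single i₀]
  · rw [if_pos hw, coeff_monomial, if_pos hm]
  · intro i _ hne
    split_ifs with hc
    · rw [coeff_monomial, if_neg]
      intro he
      apply hne
      funext k
      apply Fin.ext
      have : SF d i (k.1 + 1) = m (k.1 + 1) := by rw [he]
      rw [SF_apply_succ] at this
      exact this
    · exact coeff_zero _
  · intro h
    exact absurd (Finset.mem_univ _) h

lemma coeff_schur_zero (d : ℕ) (m : ℕ →₀ ℕ)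
    (h : ¬ ((∀ j, (∀ k : Fin d, k.1 + 1 ≠ j) → m j = 0)
        ∧ (∑ k : Fin d, (k.1 + 1) * m (k.1 + 1)) = d)) :
    coeff m (schur d) = 0 := by
  rw [schur_eq_s15, coeff_sum]
  apply Finset.sum_eq_zero
  intro i _
  split_ifs with hc
  · rw [coeff_monomial, if_neg]
    intro he
    apply h
    subst he
    refine ⟨fun j hj => SF_apply_ne d i hj, ?_⟩
    exact (Finset.sum_congr rfl fun k _ => by rw [SF_apply_succ]).trans hc
  · exact coeff_zero _

/-- If `Q ∈ ℂ[y₁,…,y_d]` is homogeneous of degree `d ≥ 1` (for `deg y_k = k`) and satisfies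
`∂Q/∂y_k = ∂ᵏQ/∂y₁ᵏ` for `k = 1,…,d`, then `Q = γ·S_d` where `γ` is the coefficient of the
monomial `y_d` in `Q`. -/
theorem stmt15 (d : ℕ) (hd : 1 ≤ d) (Q : MvPolynomial ℕ ℂ)
    (hsupp : Q ∈ MvPolynomial.supported ℂ (Set.Icc 1 d))
    (hhom : Q.IsWeightedHomogeneous (fun k => k) d)
    (hsys : ∀ k : ℕ, 1 ≤ k → k ≤ d →
      pderiv k Q = (fun q => pderiv 1 q)^[k] Q) :
    Q = C (MvPolynomial.coeff (Finsupp.single d 1) Q)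
        * MvPolynomial.map (algebraMap ℚ ℂ) (schur d) := by
  have hvars : ∀ (m : ℕ →₀ ℕ), coeff m Q ≠ 0 → ∀ j, m j ≠ 0 → 1 ≤ j ∧ j ≤ d := by
    intro m hm j hj
    have h1 : j ∈ Q.vars :=
      (mem_vars j).mpr ⟨m, mem_support_iff.mpr hm, Finsupp.mem_support_iff.mpr hj⟩
    have h2 := (mem_supported.mp hsupp) h1
    simpa [Set.mem_Icc] using h2
  have hbase : coeff (Finsupp.single 1 d) Q * (d.factorial : ℂ)
      = coeff (Finsupp.single d 1) Q := by
    have h := congrArg (coeff (0 : ℕ →₀ ℕ)) (hsys d hd le_rfl)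
    rw [coeff_pderiv', coeff_iter_pderiv] at h
    have hfact : ∏ j ∈ Finset.range d, (j + 1) = d.factorial := by
      simpa using (factorial_add_prod 0 d).symm
    simp only [Finsupp.coe_zero, Pi.zero_apply, zero_add, hfact, Nat.cast_one, one_mul] at h
    rw [h, mul_comm]
  have key : ∀ n : ℕ, ∀ m : ℕ →₀ ℕ, d - m 1 ≤ n →
      (∀ j, m j ≠ 0 → 1 ≤ j ∧ j ≤ d) →
      Finsupp.weight (fun k : ℕ => k) m = d →
      coeff m Q * ((∏ j ∈ Finset.Icc 1 d, (m j).factorial : ℕ) : ℂ)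
        = coeff (Finsupp.single d 1) Q := by
    have hsingle : ∀ m : ℕ →₀ ℕ, (∀ j, j ≠ 1 → m j = 0) →
        Finsupp.weight (fun k : ℕ => k) m = d → m = Finsupp.single 1 d := by
      intro m hz hw
      have hm : m = Finsupp.single 1 (m 1) := Finsupp.ext fun j => by
        rcases eq_or_ne j 1 with rfl | hj
        · simp
        · rw [hz j hj, Finsupp.single_apply, if_neg (Ne.symm hj)]
      have : m 1 = d := by
        rw [hm, weight_single, mul_one] at hw
        exact hw
      rw [hm, this]
    have hprodsingle : (∏ j ∈ Finset.Icc 1 d,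
        ((Finsupp.single 1 d : ℕ →₀ ℕ) j).factorial) = d.factorial := by
      rw [← Finset.mul_prod_erase _ _ (Finset.mem_Icc.mpr ⟨le_refl 1, hd⟩),
        Finsupp.single_eq_same, Finset.prod_eq_one, mul_one]
      intro j hj
      rw [Finsupp.single_apply, if_neg (Ne.symm (Finset.ne_of_mem_erase hj))]
      exact Nat.factorial_zero
    intro n
    induction n with
    | zero =>
      intro m hn hs hw
      by_cases hex : ∃ k, 2 ≤ k ∧ m k ≠ 0
      · exfalso
        obtain ⟨k, hk2, hmk⟩ := hex
        have hkd : k ≤ d := (hs k hmk).2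
        have hwe := weight_eq_sum d m hs
        rw [hw] at hwe
        have h1mem : (1 : ℕ) ∈ Finset.Icc 1 d := Finset.mem_Icc.mpr ⟨le_refl 1, hd⟩
        have hkmem : k ∈ (Finset.Icc 1 d).erase 1 :=
          Finset.mem_erase.mpr ⟨by omega, Finset.mem_Icc.mpr ⟨by omega, hkd⟩⟩
        have hsplit : 1 * m 1 + ∑ j ∈ (Finset.Icc 1 d).erase 1, j * m j
            = ∑ j ∈ Finset.Icc 1 d, j * m j :=
          Finset.add_sum_erase _ (fun j => j * m j) h1mem
        have hwe2 : ∑ j ∈ Finset.Icc 1 d, j * m j = d := hwe.symm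
        have hge : k * m k ≤ ∑ j ∈ (Finset.Icc 1 d).erase 1, j * m j :=
          Finset.single_le_sum (f := fun j => j * m j) (fun _ _ => Nat.zero_le _) hkmem
        have hk1 : 1 ≤ m k := Nat.one_le_iff_ne_zero.mpr hmk
        have : 2 ≤ k * m k := le_trans hk2 (Nat.le_mul_of_pos_right _ (by omega))
        omega
      · push_neg at hex
        have hz : ∀ j, j ≠ 1 → m j = 0 := by
          intro j hj
          rcases Nat.lt_or_ge j 2 with h2 | h2
          · interval_cases j
            · by_contra h0
              exact absurd (hs 0 h0).1 (by omega)
            · exact absurd rfl hj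
          · exact hex j h2
        rw [hsingle m hz hw, hprodsingle]
        exact hbase
    | succ n ih =>
      intro m hn hs hw
      by_cases hex : ∃ k, 2 ≤ k ∧ m k ≠ 0
      · obtain ⟨k, hk2, hmk0⟩ := hex
        have hkd : k ≤ d := (hs k hmk0).2
        have hmk : 1 ≤ m k := Nat.one_le_iff_ne_zero.mpr hmk0
        set μ : ℕ →₀ ℕ := m - Finsupp.single k 1 with hμdef
        have hμ : μ + Finsupp.single k 1 = m :=
          tsub_add_cancel_of_le (Finsupp.single_le_iff.mpr hmk)
        have hμ1 : μ 1 = m 1 := by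
          rw [hμdef, Finsupp.tsub_apply, Finsupp.single_apply]
          split_ifs <;> omega
        have hμk : μ k + 1 = m k := by
          rw [hμdef, Finsupp.tsub_apply, Finsupp.single_apply]
          split_ifs <;> omega
        set m' : ℕ →₀ ℕ := μ + Finsupp.single 1 k with hm'def
        have hm'1 : m' 1 = m 1 + k := by
          simp [hm'def, Finsupp.add_apply, Finsupp.single_eq_same, hμ1]
        have hm'k : m' k = m k - 1 := by
          rw [hm'def, Finsupp.add_apply, hμdef, Finsupp.tsub_apply,
            Finsupp.single_apply, Finsupp.single_apply]
          split_ifs <;> omega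
        have hm'j : ∀ j, j ≠ 1 → j ≠ k → m' j = m j := by
          intro j h1 h2
          rw [hm'def, Finsupp.add_apply, hμdef, Finsupp.tsub_apply,
            Finsupp.single_apply, Finsupp.single_apply]
          split_ifs <;> omega
        have h := congrArg (coeff μ) (hsys k (by omega) hkd)
        rw [coeff_pderiv', coeff_iter_pderiv, hμ, hμk, hμ1] at h
        have hs' : ∀ j, m' j ≠ 0 → 1 ≤ j ∧ j ≤ d := by
          intro j hj
          rcases eq_or_ne j 1 with rfl | h1
          · exact ⟨le_refl 1, hd⟩
          rcases eq_or_ne j k with rfl | h2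
          · exact ⟨by omega, hkd⟩
          · rw [hm'j j h1 h2] at hj
            exact hs j hj
        have hw' : Finsupp.weight (fun k : ℕ => k) m' = d := by
          have e1 : Finsupp.weight (fun k : ℕ => k) m
              = Finsupp.weight (fun k : ℕ => k) μ + k := by
            rw [← hμ, map_add, weight_single, one_mul]
          have e2 : Finsupp.weight (fun k : ℕ => k) m'
              = Finsupp.weight (fun k : ℕ => k) μ + k := by
            rw [hm'def, map_add, weight_single, mul_one]
          omega
        have hn' : d - m' 1 ≤ n := by
          rw [hm'1]
          omega
        have ihm' := ih m' hn' hs' hw'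
        have h1mem : (1 : ℕ) ∈ Finset.Icc 1 d := Finset.mem_Icc.mpr ⟨le_refl 1, hd⟩
        have hkmem : k ∈ (Finset.Icc 1 d).erase 1 :=
          Finset.mem_erase.mpr ⟨by omega, Finset.mem_Icc.mpr ⟨by omega, hkd⟩⟩
        set R : ℕ := ∏ j ∈ ((Finset.Icc 1 d).erase 1).erase k, (m j).factorial with hR
        have hPm : ∏ j ∈ Finset.Icc 1 d, (m j).factorial
            = (m 1).factorial * ((m k).factorial * R) := by
          rw [← Finset.mul_prod_erase _ _ h1mem, ← Finset.mul_prod_erase _ _ hkmem]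
        have hPm' : ∏ j ∈ Finset.Icc 1 d, (m' j).factorial
            = (m 1 + k).factorial * ((m k - 1).factorial * R) := by
          rw [← Finset.mul_prod_erase _ _ h1mem, ← Finset.mul_prod_erase _ _ hkmem, hm'1, hm'k]
          congr 2
          apply Finset.prod_congr rfl
          intro j hj
          have hj1 : j ≠ 1 := Finset.ne_of_mem_erase (Finset.mem_of_mem_erase hj)
          have hjk : j ≠ k := Finset.ne_of_mem_erase hj
          rw [hm'j j hj1 hjk]
        have hnat2 : (∏ j ∈ Finset.range k, (m 1 + j + 1))
              * (∏ j ∈ Finset.Icc 1 d, (m j).factorial)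
            = m k * (∏ j ∈ Finset.Icc 1 d, (m' j).factorial) := by
          rw [hPm, hPm']
          obtain ⟨t, ht⟩ : ∃ t, m k = t + 1 := ⟨m k - 1, by omega⟩
          rw [ht, factorial_add_prod (m 1) k, Nat.add_sub_cancel, Nat.factorial_succ]
          ring
        have hA : ((∏ j ∈ Finset.range k, (m 1 + j + 1) : ℕ) : ℂ) ≠ 0 :=
          Nat.cast_ne_zero.mpr (Finset.prod_pos fun j _ => by omega).ne'
        apply mul_left_cancel₀ hA
        have hcast : ((∏ j ∈ Finset.range k, (m 1 + j + 1) : ℕ) : ℂ)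
              * ((∏ j ∈ Finset.Icc 1 d, (m j).factorial : ℕ) : ℂ)
            = ((m k : ℕ) : ℂ) * ((∏ j ∈ Finset.Icc 1 d, (m' j).factorial : ℕ) : ℂ) := by
          exact_mod_cast congrArg (Nat.cast (R := ℂ)) hnat2
        linear_combination (coeff m Q) * hcast
          + (((∏ j ∈ Finset.Icc 1 d, (m' j).factorial : ℕ) : ℂ)) * h
          + ((∏ j ∈ Finset.range k, (m 1 + j + 1) : ℕ) : ℂ) * ihm'
      · push_neg at hex
        have hz : ∀ j, j ≠ 1 → m j = 0 := by
          intro j hj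
          rcases Nat.lt_or_ge j 2 with h2 | h2
          · interval_cases j
            · by_contra h0
              exact absurd (hs 0 h0).1 (by omega)
            · exact absurd rfl hj
          · exact hex j h2
        rw [hsingle m hz hw, hprodsingle]
        exact hbase
  apply MvPolynomial.ext
  intro m
  by_cases hcase : (∀ j, m j ≠ 0 → 1 ≤ j ∧ j ≤ d) ∧ Finsupp.weight (fun k : ℕ => k) m = d
  · obtain ⟨hs, hw⟩ := hcase
    have h0 : ∀ j, (∀ k : Fin d, k.1 + 1 ≠ j) → m j = 0 := by
      intro j hj
      by_contra hne
      obtain ⟨hj1, hj2⟩ := hs j hne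
      exact hj ⟨j - 1, by omega⟩ (by simp; omega)
    have hfinw : ∑ k : Fin d, (k.1 + 1) * m (k.1 + 1) = d :=
      (sum_fin_icc d fun j => j * m j).trans ((weight_eq_sum d m hs).symm.trans hw)
    rw [coeff_C_mul, coeff_map, coeff_schur_of d m h0 hfinw, map_prod]
    have hmapped : ∀ k : Fin d, algebraMap ℚ ℂ (((m (k.1 + 1)).factorial : ℚ)⁻¹)
        = (((m (k.1 + 1)).factorial : ℂ))⁻¹ := fun k => by rw [map_inv₀, map_natCast]
    rw [Finset.prod_congr rfl (fun k _ => hmapped k),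
      prod_fin_icc d fun j => (((m j).factorial : ℂ))⁻¹, Finset.prod_inv_distrib,
      ← Nat.cast_prod]
    have hkey := key d m (by omega) hs hw
    have hPne : ((∏ j ∈ Finset.Icc 1 d, (m j).factorial : ℕ) : ℂ) ≠ 0 :=
      Nat.cast_ne_zero.mpr (Finset.prod_pos fun j _ => (m j).factorial_pos).ne'
    rw [← hkey, mul_assoc, mul_inv_cancel₀ hPne, mul_one]
  · have hQ0 : coeff m Q = 0 := by
      by_contra h
      exact hcase ⟨hvars m h, hhom h⟩
    have hS0 : coeff m (schur d) = 0 := by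
      apply coeff_schur_zero
      rintro ⟨c2, c3⟩
      have hs : ∀ j, m j ≠ 0 → 1 ≤ j ∧ j ≤ d := by
        intro j hj
        by_contra hn
        apply hj
        apply c2 j
        intro k hk
        exact hn (by omega)
      exact hcase ⟨hs, (weight_eq_sum d m hs).trans
        ((sum_fin_icc d fun j => j * m j).symm.trans c3)⟩
    rw [coeff_C_mul, coeff_map, hS0, map_zero, mul_zero, hQ0]
end
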